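/- If L is a subset of E with E \ L = A ∪ B for disjoint A, B satisfying r*(E \ L) = r*(A) + r*(B), then for every basis Bs of M, the inequality |Bs ∩ L| ≤ r(L) is implied by the inequalities |Bs ∩ (E \ A)| ≤ r(E \ A), |Bs ∩ (E \ B)| ≤ r(E \ B), and |Bs| = r(E). That is, for any vector x with x(E \ A) ≤ r(E \ A), x(E \ B) ≤ r(E \ B), and x(E) = r(E), with A, B disjoint covering E \ L, we have x(L) ≤ r(L). -/

import Mathlib

open Matroid Set

/-- The rank of a set `X` in a matroid `M`: the largest cardinality of an
independent subset of `X`. -/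
noncomputable def mrank {α : Type*} (M : Matroid α) (X : Set α) : ℕ :=
  sSup {n | ∃ I, M.Indep I ∧ I ⊆ X ∧ I.ncard = n}

/-- A matroid is 2-connected (nonseparable) if its ground set cannot be
partitioned into two nonempty sets whose ranks sum to the rank of the whole. -/
def TwoConnected {α : Type*} (M : Matroid α) : Prop :=
  ¬ ∃ A B : Set α, A.Nonempty ∧ B.Nonempty ∧ Disjoint A B ∧ A ∪ B = M.E ∧
      mrank M A + mrank M B = mrank M M.E

/-- A subset `L` of the ground set is locked in `M` if `M|L` is 2-connected,
`M✶|(E \ L)` is 2-connected, and `min (r L) (r✶ (E \ L)) ≥ 2`. -/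
def Locked {α : Type*} (M : Matroid α) (L : Set α) : Prop :=
  L ⊆ M.E ∧ TwoConnected (M ↾ L) ∧ TwoConnected (M✶ ↾ (M.E \ L)) ∧
    2 ≤ mrank M L ∧ 2 ≤ mrank M✶ (M.E \ L)

private theorem mrank_eq_ncard_of_basis' {α : Type*} {M : Matroid α} (hfin : M.E.Finite)
    {I X : Set α} (hI : M.IsBasis' I X) : mrank M X = I.ncard := by
  apply le_antisymm
  · refine csSup_le ⟨I.ncard, ⟨I, hI.indep, hI.subset, rfl⟩⟩ ?_
    rintro n ⟨J, hJ, hJX, rfl⟩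
    obtain ⟨J', hJ', hJJ'⟩ := hJ.subset_isBasis'_of_subset hJX
    have h1 : J.ncard ≤ J'.ncard :=
      ncard_le_ncard hJJ' (hfin.subset hJ'.indep.subset_ground)
    have h2 : J'.ncard = I.ncard := by
      rw [ncard_def, hJ'.encard_eq_encard hI, ← ncard_def]
    omega
  · apply le_csSup
    · refine ⟨M.E.ncard, ?_⟩
      rintro n ⟨J, hJ, _, rfl⟩
      exact ncard_le_ncard hJ.subset_ground hfin
    · exact ⟨I, hI.indep, hI.subset, rfl⟩

private theorem mrank_dual_add {α : Type*} {M : Matroid α} (hfin : M.E.Finite)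
    {X : Set α} (hX : X ⊆ M.E) :
    mrank M✶ X + mrank M M.E = X.ncard + mrank M (M.E \ X) := by
  obtain ⟨I, hI⟩ := M.exists_isBasis (M.E \ X) diff_subset
  obtain ⟨Bs, hBs, hIBs⟩ := hI.indep.exists_isBase_superset
  have hBsfin : Bs.Finite := hfin.subset hBs.subset_ground
  have hXfin : X.Finite := hfin.subset hX
  have heq : I = Bs ∩ (M.E \ X) :=
    hI.eq_of_subset_indep (hBs.indep.inter_right _)
      (subset_inter hIBs hI.subset) inter_subset_right
  have hbX : M.IsBasis (Bs ∩ (M.E \ X)) (M.E \ X) := heq ▸ hI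
  have hdual : M✶.IsBasis ((M.E \ Bs) ∩ (M.E \ (M.E \ X))) (M.E \ (M.E \ X)) :=
    hBs.compl_inter_isBasis_of_inter_isBasis hbX
  rw [diff_diff_cancel_left hX] at hdual
  have h1 : mrank M✶ X = ((M.E \ Bs) ∩ X).ncard :=
    mrank_eq_ncard_of_basis' (M := M✶) hfin hdual.isBasis'
  have h2 : mrank M M.E = Bs.ncard :=
    mrank_eq_ncard_of_basis' hfin hBs.isBasis_ground.isBasis'
  have h3 : mrank M (M.E \ X) = (Bs ∩ (M.E \ X)).ncard :=
    mrank_eq_ncard_of_basis' hfin hbX.isBasis'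
  rw [h1, h2, h3]
  have e1 : (M.E \ Bs) ∩ X = X \ Bs := by
    ext e; constructor
    · rintro ⟨⟨-, h⟩, hx⟩; exact ⟨hx, h⟩
    · rintro ⟨hx, h⟩; exact ⟨⟨hX hx, h⟩, hx⟩
  have e2 : Bs ∩ (M.E \ X) = Bs \ X := by
    ext e; constructor
    · rintro ⟨hb, -, h⟩; exact ⟨hb, h⟩
    · rintro ⟨hb, h⟩; exact ⟨hb, hBs.subset_ground hb, h⟩
  rw [e1, e2]
  have c1 := ncard_inter_add_ncard_diff_eq_ncard X Bs hXfin
  have c2 := ncard_inter_add_ncard_diff_eq_ncard Bs X hBsfin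
  have c3 : (X ∩ Bs).ncard = (Bs ∩ X).ncard := by rw [inter_comm]
  omega

theorem stmt4 {α : Type*} (M : Matroid α) (hfin : M.E.Finite) (L : Set α) (hL : L ⊆ M.E)
    (A B : Set α) (hA : A.Nonempty) (hB : B.Nonempty) (hdisj : Disjoint A B)
    (hunion : A ∪ B = M.E \ L)
    (hsep : mrank M✶ (M.E \ L) = mrank M✶ A + mrank M✶ B)
    (x : α → ℝ)
    (hxA : ∑ᶠ e ∈ M.E \ A, x e ≤ (mrank M (M.E \ A) : ℝ))
    (hxB : ∑ᶠ e ∈ M.E \ B, x e ≤ (mrank M (M.E \ B) : ℝ))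
    (hxE : ∑ᶠ e ∈ M.E, x e = (mrank M M.E : ℝ)) :
    ∑ᶠ e ∈ L, x e ≤ (mrank M L : ℝ) := by
  have hAsub : A ⊆ M.E \ L := subset_union_left.trans hunion.subset
  have hBsub : B ⊆ M.E \ L := subset_union_right.trans hunion.subset
  have hAE : A ⊆ M.E := hAsub.trans diff_subset
  have hBE : B ⊆ M.E := hBsub.trans diff_subset
  have hAfin : A.Finite := hfin.subset hAE
  have hBfin : B.Finite := hfin.subset hBE
  have hLfin : L.Finite := hfin.subset hL
  have hdAL : Disjoint A L := disjoint_sdiff_left.mono_left hAsub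
  have hdBL : Disjoint B L := disjoint_sdiff_left.mono_left hBsub
  have hdA' : Disjoint A (B ∪ L) := disjoint_union_right.mpr ⟨hdisj, hdAL⟩
  have hE : A ∪ (B ∪ L) = M.E := by
    rw [← union_assoc, hunion, diff_union_of_subset hL]
  have hE2 : B ∪ (A ∪ L) = M.E := (union_left_comm B A L).trans hE
  have hdB' : Disjoint B (A ∪ L) := disjoint_union_right.mpr ⟨hdisj.symm, hdBL⟩
  have hEA : M.E \ A = B ∪ L := by
    rw [← hE]; exact union_diff_cancel_left hdA'.inter_eq.le
  have hEB : M.E \ B = A ∪ L := by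
    rw [← hE2]; exact union_diff_cancel_left hdB'.inter_eq.le
  have sEA : ∑ᶠ e ∈ M.E \ A, x e = (∑ᶠ e ∈ B, x e) + ∑ᶠ e ∈ L, x e := by
    rw [hEA, finsum_mem_union hdBL hBfin hLfin]
  have sEB : ∑ᶠ e ∈ M.E \ B, x e = (∑ᶠ e ∈ A, x e) + ∑ᶠ e ∈ L, x e := by
    rw [hEB, finsum_mem_union hdAL hAfin hLfin]
  have sE : ∑ᶠ e ∈ M.E, x e
      = (∑ᶠ e ∈ A, x e) + ((∑ᶠ e ∈ B, x e) + ∑ᶠ e ∈ L, x e) := by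
    rw [← hE, finsum_mem_union hdA' hAfin (hBfin.union hLfin),
      finsum_mem_union hdBL hBfin hLfin]
  have dL := mrank_dual_add hfin (diff_subset : M.E \ L ⊆ M.E)
  rw [diff_diff_cancel_left hL] at dL
  have dA := mrank_dual_add hfin hAE
  have dB := mrank_dual_add hfin hBE
  have hcard : A.ncard + B.ncard = (M.E \ L).ncard := by
    rw [← hunion, ncard_union_eq hdisj hAfin hBfin]
  have key : mrank M L + mrank M M.E = mrank M (M.E \ A) + mrank M (M.E \ B) := by
    omega
  have keyR : (mrank M (M.E \ A) : ℝ) + (mrank M (M.E \ B) : ℝ)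
      = (mrank M L : ℝ) + (mrank M M.E : ℝ) := by exact_mod_cast key.symm
  rw [sEA] at hxA
  rw [sEB] at hxB
  rw [sE] at hxE
  linarith
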